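/- For every b ∈ ℂ and all m, n ∈ ℤ the following identities of ℂ-linear operators on W hold: L_m∘L_n − L_n∘L_m = (n−m)·L_{m+n}; H_m∘H_n − H_n∘H_m = 0; L_m∘H_n − H_n∘L_m = n·H_{m+n}; L_m∘G_n⁺ − G_n⁺∘L_m = (n − m/2)·G_{m+n}⁺; L_m∘G_n⁻ − G_n⁻∘L_m = (n − m/2)·G_{m+n}⁻; H_m∘G_n⁺ − G_n⁺∘H_m = G_{m+n}⁺; H_m∘G_n⁻ − G_n⁻∘H_m = −G_{m+n}⁻; G_m⁺∘G_n⁻ + G_n⁻∘G_m⁺ = −2·L_{m+n} + (m−n)·H_{m+n}; G_m⁺∘G_n⁺ + G_n⁺∘G_m⁺ = 0; G_m⁻∘G_n⁻ + G_n⁻∘G_m⁻ = 0. (Thus these operators define a representation of the N=2 Ramond algebra on W with the central element acting as 0.) -/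

import Mathlib

/- STATEMENT 1: the twisted operators L_m, H_m, G_m⁺, G_m⁻ on W = ℂ[t,t⁻¹] ⊕ ξℂ[t,t⁻¹]
satisfy the defining (anti)commutation relations of the N=2 Ramond algebra with the
central element acting as 0. -/

open LaurentPolynomial

noncomputable section

abbrev Lp := LaurentPolynomial ℂ

lemma smulC' (a : ℂ) (f : Lp) : a • f = C a * f := by
  rw [C_eq_algebraMap, Algebra.smul_def]

lemma keyD (D : Lp →ₗ[ℂ] Lp) (hD : ∀ n : ℤ, D (T n) = (n : ℂ) • T n) (m : ℤ) (f : Lp) :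
    D (T m * f) = T m * D f + (m : ℂ) • (T m * f) := by
  induction f using LaurentPolynomial.induction_on' with
  | add p q hp hq =>
    simp only [mul_add, map_add, hp, hq, smul_add]; ring
  | C_mul_T n a =>
    have h1 : T m * (C a * T n) = a • T (m + n) := by
      rw [smulC', mul_left_comm, ← T_add]
    have h2 : C a * T n = a • T n := (smulC' a _).symm
    rw [h1, h2, map_smul, map_smul, hD, hD, smul_comm]
    simp only [smulC', T_add, map_add]
    push_cast
    rw [map_add]
    ring

/-- `L_m(f,g) = (t^m(D+mb)f, t^m(D+m(b+1/2))g)` -/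
def Lop (D : Lp →ₗ[ℂ] Lp) (b : ℂ) (m : ℤ) : Lp × Lp → Lp × Lp :=
  fun w => (T m * (D w.1 + ((m : ℂ) * b) • w.1),
            T m * (D w.2 + ((m : ℂ) * (b + 1 / 2)) • w.2))

/-- `H_m(f,g) = (−2b·t^m f, (1−2b)·t^m g)` -/
def Hop (b : ℂ) (m : ℤ) : Lp × Lp → Lp × Lp :=
  fun w => ((-2 * b) • (T m * w.1), (1 - 2 * b) • (T m * w.2))

/-- `G_m⁺(f,g) = (0, −2t^m(D+2mb)f)` -/
def Gp (D : Lp →ₗ[ℂ] Lp) (b : ℂ) (m : ℤ) : Lp × Lp → Lp × Lp :=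
  fun w => (0, (-2 : ℂ) • (T m * (D w.1 + (2 * (m : ℂ) * b) • w.1)))

/-- `G_m⁻(f,g) = (t^m g, 0)` -/
def Gm (m : ℤ) : Lp × Lp → Lp × Lp :=
  fun w => (T m * w.2, 0)

theorem stmt1 (D : Lp →ₗ[ℂ] Lp)
    (hD : ∀ n : ℤ, D (T n) = (n : ℂ) • T n) (b : ℂ) (m n : ℤ) :
    (∀ w, Lop D b m (Lop D b n w) - Lop D b n (Lop D b m w)
        = ((n : ℂ) - (m : ℂ)) • Lop D b (m + n) w) ∧
    (∀ w, Hop b m (Hop b n w) - Hop b n (Hop b m w) = 0) ∧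
    (∀ w, Lop D b m (Hop b n w) - Hop b n (Lop D b m w) = (n : ℂ) • Hop b (m + n) w) ∧
    (∀ w, Lop D b m (Gp D b n w) - Gp D b n (Lop D b m w)
        = ((n : ℂ) - (m : ℂ) / 2) • Gp D b (m + n) w) ∧
    (∀ w, Lop D b m (Gm n w) - Gm n (Lop D b m w)
        = ((n : ℂ) - (m : ℂ) / 2) • Gm (m + n) w) ∧
    (∀ w, Hop b m (Gp D b n w) - Gp D b n (Hop b m w) = Gp D b (m + n) w) ∧
    (∀ w, Hop b m (Gm n w) - Gm n (Hop b m w) = -Gm (m + n) w) ∧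
    (∀ w, Gp D b m (Gm n w) + Gm n (Gp D b m w)
        = (-2 : ℂ) • Lop D b (m + n) w + ((m : ℂ) - (n : ℂ)) • Hop b (m + n) w) ∧
    (∀ w, Gp D b m (Gp D b n w) + Gp D b n (Gp D b m w) = 0) ∧
    (∀ w, Gm m (Gm n w) + Gm n (Gm m w) = 0) := by
  refine ⟨?_,?_,?_,?_,?_,?_,?_,?_,?_,?_⟩ <;> intro w <;>
  refine Prod.ext ?_ ?_ <;>
  · simp only [Lop, Hop, Gp, Gm, Prod.fst_sub, Prod.snd_sub, Prod.fst_add, Prod.snd_add,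
      Prod.smul_fst, Prod.smul_snd, Prod.fst_neg, Prod.snd_neg, Prod.fst_zero, Prod.snd_zero,
      keyD D hD, map_add, map_smul, map_zero, smul_zero, mul_zero, zero_mul,
      mul_add, smul_add, mul_smul_comm, ← mul_assoc, ← T_add]
    try simp only [show T (n+m) = T (m+n) from by rw [add_comm]]
    match_scalars <;> push_cast <;> ring


end
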